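/- Let n ≥ 1 and let γ_1, …, γ_n be points of the circle ℝ/2πℤ (with arc-length distance d) which are all contained in a closed arc of length strictly less than π. Then: (i) there is a unique θ ∈ ℝ/2πℤ minimizing max_{1 ≤ s ≤ n} d(θ, γ_s), namely the midpoint of the unique shortest closed arc containing all the γ_s; and (ii) if u_s = e^{iα_s} and v_s = e^{iβ_s} are unit complex numbers with α_s − β_s ≡ γ_s (mod 2π) for each s, then the rotation by angle θ is the unique minimizer, over all R ∈ SO(2), of max_{1 ≤ s ≤ n} ‖u_s − R v_s‖ (Euclidean norm on ℝ² ≅ ℂ). -/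

import Mathlib

open scoped BigOperators

private lemma ac_norm_eq {z : ℝ} (h : |z| ≤ Real.pi) :
    ‖(z : AddCircle (2 * Real.pi))‖ = |z| := by
  have hπ := Real.pi_pos
  exact (AddCircle.norm_coe_eq_abs_iff (p := 2 * Real.pi) (by positivity)).2
    (by rwa [show |(2 * Real.pi)| / 2 = Real.pi by rw [abs_of_pos (by positivity)]; ring])

private lemma ac_dist_le_pi (a b : AddCircle (2 * Real.pi)) : dist a b ≤ Real.pi := by
  have hπ := Real.pi_pos
  rw [dist_eq_norm]
  have h := AddCircle.norm_le_half_period (p := 2 * Real.pi) (x := a - b) (by positivity)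
  rwa [show |(2 * Real.pi)| / 2 = Real.pi by rw [abs_of_pos (by positivity)]; ring] at h

private lemma ac_dist_eq {x y : ℝ} (h : |x - y| ≤ Real.pi) :
    dist ((x : AddCircle (2 * Real.pi))) ((y : ℝ) : AddCircle (2 * Real.pi)) = |x - y| := by
  rw [dist_eq_norm, ← AddCircle.coe_sub]
  exact ac_norm_eq h

private lemma ac_dist_le (x y : ℝ) :
    dist ((x : AddCircle (2 * Real.pi))) ((y : ℝ) : AddCircle (2 * Real.pi)) ≤ |x - y| := by
  rcases le_or_gt (|x - y|) Real.pi with h | h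
  · rw [ac_dist_eq h]
  · exact (ac_dist_le_pi _ _).trans h.le

private lemma ac_cases (z : ℝ) : ∃ k : ℤ,
    z - k * (2 * Real.pi) = ‖(z : AddCircle (2 * Real.pi))‖ ∨
    z - k * (2 * Real.pi) = -‖(z : AddCircle (2 * Real.pi))‖ := by
  refine ⟨round ((2 * Real.pi)⁻¹ * z), ?_⟩
  rw [AddCircle.norm_eq]
  rcases abs_cases (z - round ((2 * Real.pi)⁻¹ * z) * (2 * Real.pi)) with ⟨h, _⟩ | ⟨h, _⟩
  · exact Or.inl h.symm
  · exact Or.inr (by rw [h, neg_neg])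

private lemma ac_coe_eq_iff {x y : ℝ} :
    ((x : AddCircle (2 * Real.pi)) = ((y : ℝ) : AddCircle (2 * Real.pi)))
      ↔ ∃ k : ℤ, x - y = k * (2 * Real.pi) := by
  rw [← sub_eq_zero, ← AddCircle.coe_sub, AddCircle.coe_eq_zero_iff]
  simp only [zsmul_eq_mul]
  exact ⟨fun ⟨n, h⟩ => ⟨n, h.symm⟩, fun ⟨n, h⟩ => ⟨n, h.symm⟩⟩

private lemma ac_cos_dist (x y : ℝ) :
    Real.cos (dist ((x : AddCircle (2 * Real.pi))) ((y : ℝ) : AddCircle (2 * Real.pi)))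
      = Real.cos (x - y) := by
  rw [dist_eq_norm, ← AddCircle.coe_sub]
  obtain ⟨k, hk | hk⟩ := ac_cases (x - y)
  · rw [← hk, Real.cos_sub_int_mul_two_pi]
  · have h2 : ‖((x - y : ℝ) : AddCircle (2 * Real.pi))‖ = -(x - y - k * (2 * Real.pi)) := by
      linarith
    rw [h2, Real.cos_neg, Real.cos_sub_int_mul_two_pi]

private lemma norm_exp_sub_exp (x y : ℝ) :
    ‖Complex.exp ((x : ℂ) * Complex.I) - Complex.exp ((y : ℂ) * Complex.I)‖ =
      Real.sqrt (2 - 2 * Real.cos (x - y)) := by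
  have h1 : ‖Complex.exp ((x : ℂ) * Complex.I) - Complex.exp ((y : ℂ) * Complex.I)‖ ^ 2
      = 2 - 2 * Real.cos (x - y) := by
    rw [Complex.sq_norm, Complex.normSq_apply, Complex.sub_re,
      Complex.sub_im, Complex.exp_ofReal_mul_I_re, Complex.exp_ofReal_mul_I_im,
      Complex.exp_ofReal_mul_I_re, Complex.exp_ofReal_mul_I_im, Real.cos_sub]
    nlinarith [Real.sin_sq_add_cos_sq x, Real.sin_sq_add_cos_sq y]
  rw [← h1, Real.sqrt_sq (norm_nonneg _)]

/-- If `γ 1, …, γ n` are points of the circle `ℝ/2πℤ` (with arc-length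
distance) all lying in a closed arc of length `< π`, then (i) there is a unique
`θ` minimizing `max_s d(θ, γ s)`, namely the midpoint of the unique shortest closed arc
containing all the `γ s`; and (ii) for unit complex numbers `u s = e^{i α s}`,
`v s = e^{i β s}` with `α s − β s ≡ γ s (mod 2π)`, the rotation by angle `θ` is the
unique minimizer over `SO(2)` of `max_s ‖u s − R (v s)‖`. -/
theorem maxmin_procrustes (n : ℕ) (hn : 1 ≤ n) (γ : Fin n → AddCircle (2 * Real.pi))
    (harc : ∃ a ℓ : ℝ, 0 ≤ ℓ ∧ ℓ < Real.pi ∧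
      ∀ s, ∃ t ∈ Set.Icc a (a + ℓ), ((t : AddCircle (2 * Real.pi)) = γ s))
    (u v : Fin n → ℂ) (α β : Fin n → ℝ)
    (hu : ∀ s, u s = Complex.exp (α s * Complex.I))
    (hv : ∀ s, v s = Complex.exp (β s * Complex.I))
    (hγ : ∀ s, ((α s - β s : ℝ) : AddCircle (2 * Real.pi)) = γ s) :
    ∃ θ : AddCircle (2 * Real.pi),
      -- (i) θ minimizes the maximal distance to the γ s …
      (∀ θ' : AddCircle (2 * Real.pi), (⨆ s, dist θ (γ s)) ≤ ⨆ s, dist θ' (γ s)) ∧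
      -- … and is the unique such minimizer …
      (∀ θ' : AddCircle (2 * Real.pi),
        (∀ θ'' : AddCircle (2 * Real.pi),
          (⨆ s, dist θ' (γ s)) ≤ ⨆ s, dist θ'' (γ s)) → θ' = θ) ∧
      -- … namely the midpoint of the (unique) shortest closed arc containing the γ s.
      (∃ a ℓ : ℝ, 0 ≤ ℓ ∧
        (∀ s, ∃ t ∈ Set.Icc a (a + ℓ), ((t : AddCircle (2 * Real.pi)) = γ s)) ∧
        (∀ a' ℓ' : ℝ, 0 ≤ ℓ' →
          (∀ s, ∃ t ∈ Set.Icc a' (a' + ℓ'), ((t : AddCircle (2 * Real.pi)) = γ s)) →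
          ℓ ≤ ℓ') ∧
        θ = ((a + ℓ / 2 : ℝ) : AddCircle (2 * Real.pi))) ∧
      -- (ii) rotation by θ is the unique minimizer over SO(2) of max_s ‖u s − R (v s)‖.
      (∀ t : ℝ, ((t : AddCircle (2 * Real.pi)) = θ) →
        ∀ c : ℂ, ‖c‖ = 1 →
          ((⨆ s, ‖u s - Complex.exp (t * Complex.I) * v s‖) ≤ ⨆ s, ‖u s - c * v s‖) ∧
          (c ≠ Complex.exp (t * Complex.I) →
            (⨆ s, ‖u s - Complex.exp (t * Complex.I) * v s‖)
              < ⨆ s, ‖u s - c * v s‖)) := by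
  have hπ := Real.pi_pos
  haveI : Nonempty (Fin n) := ⟨⟨0, hn⟩⟩
  obtain ⟨a, ℓ, hℓ0, hℓπ, hcov⟩ := harc
  choose t₀ ht₀ htγ using hcov
  obtain ⟨s0, hs0⟩ := Finite.exists_min t₀
  obtain ⟨s1, hs1⟩ := Finite.exists_max t₀
  set m : ℝ := t₀ s0 with hm
  set M : ℝ := t₀ s1 with hM
  have hMm0 : 0 ≤ M - m := by linarith [hs0 s1]
  have hMmπ : M - m < Real.pi := by
    have h1 := (ht₀ s0).1
    have h2 := (ht₀ s1).2
    rw [← hm] at h1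
    rw [← hM] at h2
    linarith
  set r : ℝ := (M - m) / 2 with hrdef
  have hr0 : 0 ≤ r := by linarith
  have hrπ : r < Real.pi / 2 := by linarith
  set θ₀ : ℝ := m + (M - m) / 2 with hθ₀
  clear_value θ₀ r M m
  refine ⟨(θ₀ : AddCircle (2 * Real.pi)), ?_⟩
  have hbdd : ∀ φ : AddCircle (2 * Real.pi),
      BddAbove (Set.range fun s => dist φ (γ s)) := fun φ => (Set.finite_range _).bddAbove
  -- distance from θ₀ to each γ s is at most r
  have hCd : ∀ s, dist ((θ₀ : AddCircle (2 * Real.pi))) (γ s) ≤ r := by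
    intro s
    have hts1 : m ≤ t₀ s := hs0 s
    have hts2 : t₀ s ≤ M := hs1 s
    have habs : |θ₀ - t₀ s| ≤ r := by
      rw [abs_le]
      exact ⟨by linarith, by linarith⟩
    rw [← htγ s, ac_dist_eq (habs.trans (by linarith))]
    exact habs
  have habs0 : |θ₀ - m| = r := by
    rw [abs_of_nonneg (by linarith)]
    linarith
  have hd00 : dist ((θ₀ : AddCircle (2 * Real.pi))) (γ s0) = r := by
    rw [← htγ s0, ← hm, ac_dist_eq (by rw [habs0]; linarith)]
    exact habs0
  have hSθ : (⨆ s, dist ((θ₀ : AddCircle (2 * Real.pi))) (γ s)) = r := by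
    refine le_antisymm (ciSup_le hCd) ?_
    rw [← hd00]
    exact le_ciSup (hbdd _) s0
  have hdist01 : dist (γ s0) (γ s1) = M - m := by
    rw [← htγ s0, ← htγ s1, ← hm, ← hM,
      ac_dist_eq (by rw [abs_of_nonpos (by linarith)]; linarith),
      abs_of_nonpos (by linarith)]
    ring
  -- lower bound for every point
  have hlow : ∀ φ : AddCircle (2 * Real.pi), r ≤ ⨆ s, dist φ (γ s) := by
    intro φ
    have h0 : dist φ (γ s0) ≤ ⨆ s, dist φ (γ s) := le_ciSup (hbdd φ) s0
    have h1 : dist φ (γ s1) ≤ ⨆ s, dist φ (γ s) := le_ciSup (hbdd φ) s1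
    have htri : M - m ≤ dist φ (γ s0) + dist φ (γ s1) := by
      rw [← hdist01]
      calc dist (γ s0) (γ s1) ≤ dist (γ s0) φ + dist φ (γ s1) := dist_triangle _ _ _
        _ = dist φ (γ s0) + dist φ (γ s1) := by rw [dist_comm]
    linarith
  -- uniqueness of the minimizer
  have huniq : ∀ φ : AddCircle (2 * Real.pi),
      (⨆ s, dist φ (γ s)) ≤ r → φ = (θ₀ : AddCircle (2 * Real.pi)) := by
    intro φ hφ
    obtain ⟨y, rfl⟩ := QuotientAddGroup.mk_surjective φ
    have hd0le : dist ((y : AddCircle (2 * Real.pi))) (γ s0) ≤ r :=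
      (le_ciSup (hbdd _) s0).trans hφ
    have hd1le : dist ((y : AddCircle (2 * Real.pi))) (γ s1) ≤ r :=
      (le_ciSup (hbdd _) s1).trans hφ
    have htri : M - m ≤ dist ((y : AddCircle (2 * Real.pi))) (γ s0) +
        dist ((y : AddCircle (2 * Real.pi))) (γ s1) := by
      rw [← hdist01]
      calc dist (γ s0) (γ s1) ≤ dist (γ s0) ((y : AddCircle (2 * Real.pi))) +
            dist ((y : AddCircle (2 * Real.pi))) (γ s1) := dist_triangle _ _ _
        _ = _ := by rw [dist_comm]
    have hd0 : dist ((y : AddCircle (2 * Real.pi))) (γ s0) = r := by linarith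
    have hd1 : dist ((y : AddCircle (2 * Real.pi))) (γ s1) = r := by linarith
    have hnorm0 : ‖((y - m : ℝ) : AddCircle (2 * Real.pi))‖ = r := by
      rw [AddCircle.coe_sub, ← dist_eq_norm]
      rw [← htγ s0, ← hm] at hd0
      exact hd0
    have hnorm1 : ‖((y - M : ℝ) : AddCircle (2 * Real.pi))‖ = r := by
      rw [AddCircle.coe_sub, ← dist_eq_norm]
      rw [← htγ s1, ← hM] at hd1
      exact hd1
    obtain ⟨k, hk | hk⟩ := ac_cases (y - m)
    · -- y - m - k·2π = r, so y ≡ θ₀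
      rw [hnorm0] at hk
      refine ac_coe_eq_iff.2 ⟨k, by linarith⟩
    · -- y - m - k·2π = -r
      rw [hnorm0] at hk
      have hyM : ((y - M : ℝ) : AddCircle (2 * Real.pi)) = ((-(3 * r) : ℝ) : _) :=
        ac_coe_eq_iff.2 ⟨k, by linarith⟩
      rw [hyM] at hnorm1
      rcases le_or_gt (3 * r) Real.pi with h3 | h3
      · have h4 : ‖((-(3 * r) : ℝ) : AddCircle (2 * Real.pi))‖ = 3 * r := by
          rw [ac_norm_eq (by rw [abs_neg, abs_of_nonneg (by linarith)]; exact h3),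
            abs_neg, abs_of_nonneg (by linarith)]
        rw [h4] at hnorm1
        have hr00 : r = 0 := by linarith
        refine ac_coe_eq_iff.2 ⟨k, by linarith⟩
      · exfalso
        have hkey : ((-(3 * r) : ℝ) : AddCircle (2 * Real.pi))
            = ((2 * Real.pi - 3 * r : ℝ) : AddCircle (2 * Real.pi)) :=
          ac_coe_eq_iff.2 ⟨-1, by push_cast; ring⟩
        have h2 : ‖((2 * Real.pi - 3 * r : ℝ) : AddCircle (2 * Real.pi))‖
            = 2 * Real.pi - 3 * r := by
          rw [ac_norm_eq (by rw [abs_of_nonneg (by linarith)]; linarith),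
            abs_of_nonneg (by linarith)]
        rw [hkey, h2] at hnorm1
        linarith
  -- part (ii) setup: each norm as a function of the circle distance
  have hG : ∀ (τ : ℝ) (s : Fin n), ‖u s - Complex.exp ((τ : ℂ) * Complex.I) * v s‖
      = Real.sqrt (2 - 2 * Real.cos (dist ((τ : AddCircle (2 * Real.pi))) (γ s))) := by
    intro τ s
    have hmul : Complex.exp ((τ : ℂ) * Complex.I) * v s
        = Complex.exp (((τ + β s : ℝ) : ℂ) * Complex.I) := by
      rw [hv, ← Complex.exp_add]
      congr 1
      push_cast
      ring
    rw [hu, hmul, norm_exp_sub_exp, ← hγ s, ac_cos_dist]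
    congr 2
    rw [show τ - (α s - β s) = -(α s - (τ + β s)) by ring, Real.cos_neg]
  have hsup : ∀ τ : ℝ, (⨆ s, ‖u s - Complex.exp ((τ : ℂ) * Complex.I) * v s‖)
      = Real.sqrt (2 - 2 * Real.cos (⨆ s, dist ((τ : AddCircle (2 * Real.pi))) (γ s))) := by
    intro τ
    obtain ⟨sm, hsm⟩ := Finite.exists_max fun s => dist ((τ : AddCircle (2 * Real.pi))) (γ s)
    have hDτ : (⨆ s, dist ((τ : AddCircle (2 * Real.pi))) (γ s))
        = dist ((τ : AddCircle (2 * Real.pi))) (γ sm) :=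
      le_antisymm (ciSup_le hsm) (le_ciSup (hbdd _) sm)
    rw [hDτ]
    refine le_antisymm (ciSup_le fun s => ?_) ?_
    · rw [hG τ s]
      apply Real.sqrt_le_sqrt
      have h1 := hsm s
      have h2 := Real.cos_le_cos_of_nonneg_of_le_pi (dist_nonneg)
        (ac_dist_le_pi ((τ : AddCircle (2 * Real.pi))) (γ sm)) h1
      linarith
    · rw [← hG τ sm]
      exact le_ciSup (Set.finite_range
        (fun s => ‖u s - Complex.exp ((τ : ℂ) * Complex.I) * v s‖)).bddAbove sm
  refine ⟨?_, ?_, ?_, ?_⟩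
  · intro θ'
    rw [hSθ]
    exact hlow θ'
  · intro θ' hmin
    exact huniq θ' ((hmin _).trans hSθ.le)
  · refine ⟨m, M - m, hMm0, fun s => ⟨t₀ s, Set.mem_Icc.2 ⟨hs0 s, by linarith [hs1 s]⟩, htγ s⟩,
      ?_, by rw [hθ₀]⟩
    intro a' ℓ' hℓ' hcov'
    obtain ⟨u0, hu0, hu0γ⟩ := hcov' s0
    obtain ⟨u1, hu1, hu1γ⟩ := hcov' s1
    have h1 : dist (γ s0) (γ s1) ≤ |u0 - u1| := by
      rw [← hu0γ, ← hu1γ]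
      exact ac_dist_le u0 u1
    rw [hdist01] at h1
    rw [Set.mem_Icc] at hu0 hu1
    rcases abs_cases (u0 - u1) with ⟨h, _⟩ | ⟨h, _⟩ <;> rw [h] at h1 <;> linarith
  · intro t ht c hc
    have ht' : (⨆ s, dist ((t : AddCircle (2 * Real.pi))) (γ s)) = r := by
      rw [ht, hSθ]
    set t' : ℝ := Complex.arg c with ht'def
    have hc' : c = Complex.exp ((t' : ℂ) * Complex.I) := by
      have h := Complex.norm_mul_exp_arg_mul_I c
      rw [hc] at h
      rw [← h]
      simp [ht'def]
    have hDub : (⨆ s, dist ((t' : AddCircle (2 * Real.pi))) (γ s)) ≤ Real.pi :=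
      ciSup_le fun s => ac_dist_le_pi _ _
    have hDlb : r ≤ ⨆ s, dist ((t' : AddCircle (2 * Real.pi))) (γ s) := hlow _
    constructor
    · rw [hc', hsup t, hsup t', ht']
      apply Real.sqrt_le_sqrt
      have h := Real.cos_le_cos_of_nonneg_of_le_pi hr0 hDub hDlb
      linarith
    · intro hne
      have hne' : ((t' : AddCircle (2 * Real.pi))) ≠ ((θ₀ : ℝ) : AddCircle (2 * Real.pi)) := by
        intro h
        apply hne
        rw [hc']
        have hco : ((t' : AddCircle (2 * Real.pi))) = ((t : ℝ) : AddCircle (2 * Real.pi)) := by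
          rw [h, ht]
        obtain ⟨k, hk⟩ := ac_coe_eq_iff.1 hco
        rw [Complex.exp_eq_exp_iff_exists_int]
        refine ⟨k, ?_⟩
        have h5 : (t' : ℂ) = (t : ℂ) + (k : ℂ) * (2 * Real.pi) := by
          rw [show (t' : ℂ) = ((t + k * (2 * Real.pi) : ℝ) : ℂ) by norm_cast; linarith]
          push_cast
          ring
        rw [h5]
        ring
      have hstrict : r < ⨆ s, dist ((t' : AddCircle (2 * Real.pi))) (γ s) := by
        rcases lt_or_eq_of_le hDlb with h | h
        · exact h
        · exact absurd (huniq _ h.ge) hne'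
      rw [hc', hsup t, hsup t', ht']
      apply Real.sqrt_lt_sqrt
      · have h := Real.cos_le_one r
        linarith
      · have h := Real.cos_lt_cos_of_nonneg_of_le_pi hr0 hDub hstrict
        linarith
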